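/- Let s ≥ 0, β ∈ (1/2, 1). There exists C = C(s, β) such that for nonzero l, m, k ∈ ℤ² with l + m + k = 0 and |l| ≤ |m| ≤ |k|, one has |l|^{2s} (1/|m|^{2β} − 1/|k|^{2β}) ≤ C |l|^{1−2β} |m|^{s−1} |k|^{s}. -/

import Mathlib

/-- The Euclidean norm of a lattice vector in ℤ². -/
noncomputable def znorm (v : ℤ × ℤ) : ℝ := Real.sqrt ((v.1 : ℝ) ^ 2 + (v.2 : ℝ) ^ 2)

lemma znorm_eq_complex_abs (v : ℤ × ℤ) :
    znorm v = ‖(⟨(v.1 : ℝ), (v.2 : ℝ)⟩ : ℂ)‖ := by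
  rw [znorm, Complex.norm_def, Complex.normSq_mk]
  ring_nf

lemma znorm_pos {v : ℤ × ℤ} (hv : v ≠ 0) : 0 < znorm v := by
  have h : v.1 ≠ 0 ∨ v.2 ≠ 0 := by
    by_contra h
    push_neg at h
    exact hv (Prod.ext h.1 h.2)
  apply Real.sqrt_pos.2
  rcases h with h | h
  · have : (v.1 : ℝ) ≠ 0 := Int.cast_ne_zero.2 h
    positivity
  · have : (v.2 : ℝ) ≠ 0 := Int.cast_ne_zero.2 h
    positivity

lemma znorm_triangle (l m k : ℤ × ℤ) (h : l + m + k = 0) :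
    znorm k ≤ znorm l + znorm m := by
  have hk : k = -(l + m) := by
    have := congrArg (fun v => v - (l + m)) h
    simpa [add_sub_cancel_left, sub_eq_iff_eq_add] using by linear_combination h
  subst hk
  rw [znorm_eq_complex_abs, znorm_eq_complex_abs, znorm_eq_complex_abs]
  have : (⟨((-(l + m)).1 : ℝ), ((-(l + m)).2 : ℝ)⟩ : ℂ)
      = -((⟨(l.1 : ℝ), (l.2 : ℝ)⟩ : ℂ) + ⟨(m.1 : ℝ), (m.2 : ℝ)⟩) := by
    apply Complex.ext <;> simp
  rw [this, norm_neg]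
  exact norm_add_le _ _

/-- The core real inequality. -/
lemma key_ineq (s p a b c : ℝ) (hs : 0 ≤ s) (hp : 1 ≤ p) (ha : 0 < a)
    (hab : a ≤ b) (hbc : b ≤ c) (htri : c ≤ a + b) :
    a ^ (2 * s) * (1 / b ^ p - 1 / c ^ p) ≤ p * a ^ (1 - p) * b ^ (s - 1) * c ^ s := by
  have hb : 0 < b := lt_of_lt_of_le ha hab
  have hc : 0 < c := lt_of_lt_of_le hb hbc
  have hbp : 0 < b ^ p := Real.rpow_pos_of_pos hb p
  have hcp : 0 < c ^ p := Real.rpow_pos_of_pos hc p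
  -- Bernoulli: c^p - b^p ≤ p * c^(p-1) * (c - b)
  have hbern : c ^ p - b ^ p ≤ p * c ^ (p - 1) * (c - b) := by
    have hs' : (-1 : ℝ) ≤ b / c - 1 := by
      have : 0 ≤ b / c := by positivity
      linarith
    have h1 : 1 + p * (b / c - 1) ≤ (1 + (b / c - 1)) ^ p :=
      one_add_mul_self_le_rpow_one_add hs' hp
    have h2 : (1 + (b / c - 1)) ^ p = b ^ p / c ^ p := by
      rw [show 1 + (b / c - 1) = b / c by ring, Real.div_rpow hb.le hc.le]
    rw [h2] at h1
    have h3 : (1 + p * (b / c - 1)) * c ^ p ≤ b ^ p := by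
      have := (le_div_iff₀ hcp).1 h1
      linarith
    have hcp1 : c ^ (p - 1) * c = c ^ p := by
      rw [Real.rpow_sub hc, Real.rpow_one, div_mul_cancel₀ _ (ne_of_gt hc)]
    have h4 : (b / c - 1) * c ^ p = (b - c) * c ^ (p - 1) := by
      rw [← hcp1]; field_simp
    nlinarith [h3, h4]
  -- hence 1/b^p - 1/c^p ≤ p * (c - b) / (b^p * c)
  have hstep1 : 1 / b ^ p - 1 / c ^ p ≤ p * (c - b) / (b ^ p * c) := by
    have hcp1 : c ^ (p - 1) * c = c ^ p := by
      rw [Real.rpow_sub hc, Real.rpow_one, div_mul_cancel₀ _ (ne_of_gt hc)]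
    have heq : 1 / b ^ p - 1 / c ^ p = (c ^ p - b ^ p) / (b ^ p * c ^ p) := by
      field_simp
    rw [heq, div_le_div_iff₀ (by positivity) (by positivity)]
    calc (c ^ p - b ^ p) * (b ^ p * c) ≤ p * c ^ (p - 1) * (c - b) * (b ^ p * c) := by
          apply mul_le_mul_of_nonneg_right hbern (by positivity)
      _ = p * (c - b) * (b ^ p * c ^ p) := by rw [← hcp1]; ring
  -- main estimate
  have hLHS : a ^ (2 * s) * (1 / b ^ p - 1 / c ^ p) ≤ a ^ (2 * s) * (p * (c - b) / (b ^ p * c)) :=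
    mul_le_mul_of_nonneg_left hstep1 (Real.rpow_pos_of_pos ha _).le
  refine hLHS.trans ?_
  have hcb : c - b ≤ a := by linarith
  have hcb0 : 0 ≤ c - b := by linarith
  have ha2s : (0:ℝ) < a ^ (2 * s) := Real.rpow_pos_of_pos ha _
  have hkey : a ^ (2 * s) * a ≤ a ^ (1 - p) * b ^ (s + p - 1) * c ^ (s + 1) := by
    have e1 : a ^ (1 - p) * (a ^ (s + p - 1) * a ^ (s + 1)) = a ^ (2 * s) * a := by
      rw [← Real.rpow_add ha, ← Real.rpow_add ha,
        show 1 - p + (s + p - 1 + (s + 1)) = 2 * s + 1 by ring,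
        Real.rpow_add_one (ne_of_gt ha)]
    rw [← e1]
    have he1 : a ^ (s + p - 1) ≤ b ^ (s + p - 1) :=
      Real.rpow_le_rpow ha.le hab (by linarith)
    have he2 : a ^ (s + 1) ≤ c ^ (s + 1) :=
      Real.rpow_le_rpow ha.le (hab.trans hbc) (by linarith)
    have := mul_le_mul he1 he2 (Real.rpow_pos_of_pos ha _).le (Real.rpow_pos_of_pos hb _).le
    calc a ^ (1 - p) * (a ^ (s + p - 1) * a ^ (s + 1))
        ≤ a ^ (1 - p) * (b ^ (s + p - 1) * c ^ (s + 1)) := by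
          apply mul_le_mul_of_nonneg_left this (Real.rpow_pos_of_pos ha _).le
      _ = a ^ (1 - p) * b ^ (s + p - 1) * c ^ (s + 1) := by ring
  -- now conclude
  have hbsp : b ^ (s + p - 1) = b ^ (s - 1) * b ^ p := by
    rw [← Real.rpow_add hb]; congr 1; ring
  have hcs1 : c ^ (s + 1) = c ^ s * c := Real.rpow_add_one (ne_of_gt hc) s
  have hp0 : 0 < p := lt_of_lt_of_le one_pos hp
  rw [div_eq_mul_inv, ← mul_assoc]
  rw [hbsp, hcs1] at hkey
  have step : a ^ (2 * s) * (p * (c - b)) ≤ p * (a ^ (1 - p) * (b ^ (s - 1) * b ^ p) * (c ^ s * c)) := by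
    have h1 : a ^ (2 * s) * (c - b) ≤ a ^ (2 * s) * a :=
      mul_le_mul_of_nonneg_left hcb ha2s.le
    calc a ^ (2 * s) * (p * (c - b)) = p * (a ^ (2 * s) * (c - b)) := by ring
      _ ≤ p * (a ^ (2 * s) * a) := by apply mul_le_mul_of_nonneg_left h1 hp0.le
      _ ≤ p * (a ^ (1 - p) * (b ^ (s - 1) * b ^ p) * (c ^ s * c)) := by
          apply mul_le_mul_of_nonneg_left hkey hp0.le
  calc a ^ (2 * s) * (p * (c - b)) * (b ^ p * c)⁻¹
      ≤ p * (a ^ (1 - p) * (b ^ (s - 1) * b ^ p) * (c ^ s * c)) * (b ^ p * c)⁻¹ := by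
        apply mul_le_mul_of_nonneg_right step (by positivity)
    _ = p * a ^ (1 - p) * b ^ (s - 1) * c ^ s := by
        field_simp

theorem symmetrization_estimate_three (s β : ℝ) (hs : 0 ≤ s) (hβ1 : 1 / 2 < β) (hβ2 : β < 1) :
    ∃ C : ℝ, 0 < C ∧ ∀ l m k : ℤ × ℤ, l ≠ 0 → m ≠ 0 → k ≠ 0 → l + m + k = 0 →
      znorm l ≤ znorm m → znorm m ≤ znorm k →
      znorm l ^ (2 * s) * (1 / znorm m ^ (2 * β) - 1 / znorm k ^ (2 * β)) ≤
        C * znorm l ^ (1 - 2 * β) * znorm m ^ (s - 1) * znorm k ^ s := by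
  refine ⟨2 * β, by linarith, ?_⟩
  intro l m k hl hm hk hsum hlm hmk
  have htri := znorm_triangle l m k hsum
  exact key_ineq s (2 * β) (znorm l) (znorm m) (znorm k) hs (by linarith)
    (znorm_pos hl) hlm hmk htri
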